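/- Let n ≤ N and let g_1,...,g_n ∈ F_{q^N} be linearly independent over F_q. Then the k × n matrix G_k with entries (G_k)_{i,j} = g_j^{q^{i-1}} (the Frobenius/Moore matrix) has rank k over F_{q^N}, for any 1 ≤ k ≤ n. -/

import Mathlib

/-- the `k × n` Moore matrix built from `g_1,…,g_n ∈ F_{q^N}` linearly
independent over `F_q` (with `n ≤ N`, `1 ≤ k ≤ n`) has rank `k` over `F_{q^N}`. -/
theorem moore_matrix_rank (K L : Type*) [Field K] [Fintype K] [Field L] [Fintype L]
    [Algebra K L] (n k : ℕ) (hn : n ≤ Module.finrank K L) (hk1 : 1 ≤ k) (hkn : k ≤ n)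
    (g : Fin n → L) (hg : LinearIndependent K g) :
    (Matrix.of fun (i : Fin k) (j : Fin n) => g j ^ (Fintype.card K) ^ (i : ℕ)).rank = k := by
  classical
  set q := Fintype.card K with hqdef
  have hq : 1 < q := Fintype.one_lt_card
  -- characteristic setup
  set p := ringChar K with hpdef
  haveI : CharP K p := ringChar.charP K
  obtain ⟨m, hp, hcard⟩ := FiniteField.card K p
  haveI : CharP L p := charP_of_injective_algebraMap (algebraMap K L).injective p
  haveI : Fact p.Prime := ⟨hp⟩
  -- rows are linearly independent over L
  have hli : LinearIndependent L
      (fun (i : Fin k) => fun (j : Fin n) => g j ^ q ^ (i : ℕ)) := by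
    rw [Fintype.linearIndependent_iff]
    intro c hc
    by_contra hne
    push_neg at hne
    obtain ⟨i0, hi0⟩ := hne
    -- pointwise: for each j, ∑ i, c i * g j ^ q ^ i = 0
    have hpt : ∀ j : Fin n, ∑ i : Fin k, c i * g j ^ q ^ (i : ℕ) = 0 := by
      intro j
      have := congrFun hc j
      simpa [Finset.sum_apply] using this
    -- the q-polynomial
    set P : Polynomial L := ∑ i : Fin k, Polynomial.C (c i) * Polynomial.X ^ (q ^ (i : ℕ)) with hP
    have hevalP : ∀ x : L, P.eval x = ∑ i : Fin k, c i * x ^ q ^ (i : ℕ) := by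
      intro x; simp [hP, Polynomial.eval_finset_sum]
    have hPne : P ≠ 0 := by
      intro h0
      have hcoeff : P.coeff (q ^ (i0 : ℕ)) = c i0 := by
        rw [hP, Polynomial.finset_sum_coeff]
        rw [Finset.sum_eq_single i0]
        · simp
        · intro i _ hii
          have : q ^ (i : ℕ) ≠ q ^ (i0 : ℕ) := by
            intro h
            exact hii (Fin.ext (Nat.pow_right_injective hq h))
          simp [Polynomial.coeff_X_pow, this.symm]
        · simp
      rw [h0] at hcoeff
      simp at hcoeff
      exact hi0 hcoeff.symm
    -- degree bound
    have hdeg : P.natDegree ≤ q ^ (k - 1) := by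
      apply Polynomial.natDegree_sum_le_of_forall_le
      intro i _
      calc (Polynomial.C (c i) * Polynomial.X ^ (q ^ (i : ℕ))).natDegree
          ≤ (Polynomial.X ^ (q ^ (i : ℕ)) : Polynomial L).natDegree :=
            Polynomial.natDegree_C_mul_le _ _
        _ = q ^ (i : ℕ) := Polynomial.natDegree_X_pow _
        _ ≤ q ^ (k - 1) := Nat.pow_le_pow_right (le_of_lt hq) (Nat.le_sub_one_of_lt i.isLt)
    -- every element of the span is a root
    have hroot : ∀ x ∈ Submodule.span K (Set.range g), P.eval x = 0 := by
      intro x hx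
      induction hx using Submodule.span_induction with
      | mem x hxm =>
        obtain ⟨j, rfl⟩ := hxm
        rw [hevalP]; exact hpt j
      | zero =>
        rw [hevalP]
        have : ∀ i : Fin k, (0 : L) ^ q ^ (i : ℕ) = 0 := by
          intro i; exact zero_pow (pow_ne_zero _ (by omega))
        simp [this]
      | add x y hxm hym hx hy =>
        rw [hevalP] at hx hy ⊢
        have hadd : ∀ i : Fin k, (x + y) ^ q ^ (i : ℕ) = x ^ q ^ (i : ℕ) + y ^ q ^ (i : ℕ) := by
          intro i
          have : q ^ (i : ℕ) = p ^ ((m : ℕ) * (i : ℕ)) := by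
            rw [hqdef, hcard, ← pow_mul]
          rw [this]
          exact add_pow_char_pow x y p _
        calc ∑ i : Fin k, c i * (x + y) ^ q ^ (i : ℕ)
            = ∑ i : Fin k, (c i * x ^ q ^ (i : ℕ) + c i * y ^ q ^ (i : ℕ)) := by
              apply Finset.sum_congr rfl; intro i _; rw [hadd i]; ring
          _ = 0 := by rw [Finset.sum_add_distrib, hx, hy, add_zero]
      | smul a x hxm hx =>
        rw [hevalP] at hx ⊢
        have hsm : ∀ i : Fin k, (a • x) ^ q ^ (i : ℕ)
            = algebraMap K L a * x ^ q ^ (i : ℕ) := by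
          intro i
          rw [Algebra.smul_def, mul_pow, ← map_pow, FiniteField.pow_card_pow]
        calc ∑ i : Fin k, c i * (a • x) ^ q ^ (i : ℕ)
            = algebraMap K L a * ∑ i : Fin k, c i * x ^ q ^ (i : ℕ) := by
              rw [Finset.mul_sum]
              apply Finset.sum_congr rfl; intro i _; rw [hsm i]; ring
          _ = 0 := by rw [hx, mul_zero]
    -- counting
    set S := Submodule.span K (Set.range g) with hS
    have hfr : Module.finrank K S = n := by
      rw [hS, finrank_span_eq_card hg, Fintype.card_fin]
    haveI : Fintype S := Fintype.ofFinite S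
    have hcardS : Fintype.card S = q ^ n := by
      rw [Module.card_eq_pow_finrank (K := K) (V := S), hfr]
    -- the underlying set of S injects into the roots of P
    have hsub : (S : Set L).toFinset ⊆ P.roots.toFinset := by
      intro x hx
      rw [Set.mem_toFinset] at hx
      rw [Multiset.mem_toFinset, Polynomial.mem_roots hPne]
      exact hroot x hx
    have hle : q ^ n ≤ q ^ (k - 1) := by
      calc q ^ n = Fintype.card S := hcardS.symm
        _ = (S : Set L).toFinset.card := by rw [Set.toFinset_card]; rfl
        _ ≤ P.roots.toFinset.card := Finset.card_le_card hsub
        _ ≤ Multiset.card P.roots := Multiset.toFinset_card_le _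
        _ ≤ P.natDegree := Polynomial.card_roots' P
        _ ≤ q ^ (k - 1) := hdeg
    have : q ^ (k - 1) < q ^ n := Nat.pow_lt_pow_right hq (by omega)
    omega
  have := hli.rank_matrix
  rw [Fintype.card_fin] at this
  exact this
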